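/- Convolution integral estimate: if β ≥ γ ≥ 0 and β + γ > 1, then there is a constant C = C(β,γ) such that for all real a₁, a₂, ∫_ℝ ⟨x−a₁⟩^{−β} ⟨x−a₂⟩^{−γ} dx ≤ C ⟨a₁−a₂⟩^{−γ} φ_β(a₁−a₂), where φ_β(a) = 1 if β > 1, φ_β(a) = log(1+⟨a⟩) if β = 1, and φ_β(a) = ⟨a⟩^{1−β} if β < 1. -/

import Mathlib

open MeasureTheory
open scoped ENNReal

noncomputable section

/-- The Japanese bracket `⟨x⟩ = (1+x²)^{1/2}`. -/
def jap (x : ℝ) : ℝ := Real.sqrt (1 + x ^ 2)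

open Set

lemma jap_sq (x : ℝ) : jap x ^ 2 = 1 + x ^ 2 := Real.sq_sqrt (by positivity)

lemma one_le_jap (x : ℝ) : 1 ≤ jap x := by
  rw [jap]
  nlinarith [Real.sq_sqrt (show (0:ℝ) ≤ 1 + x^2 by positivity), Real.sqrt_nonneg (1 + x^2)]

lemma jap_pos (x : ℝ) : 0 < jap x := lt_of_lt_of_le one_pos (one_le_jap x)

lemma jap_nonneg (x : ℝ) : 0 ≤ jap x := (jap_pos x).le

lemma abs_le_jap (x : ℝ) : |x| ≤ jap x := by
  rw [jap, ← Real.sqrt_sq_eq_abs]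
  exact Real.sqrt_le_sqrt (by nlinarith)

lemma jap_neg (x : ℝ) : jap (-x) = jap x := by simp [jap]

lemma jap_mono {x y : ℝ} (h : |x| ≤ |y|) : jap x ≤ jap y := by
  apply Real.sqrt_le_sqrt
  have h2 : |x|^2 ≤ |y|^2 := pow_le_pow_left₀ (abs_nonneg x) h 2
  nlinarith [sq_abs x, sq_abs y]

lemma jap_le_two_mul {x y : ℝ} (h : |y| ≤ 2 * |x|) : jap y ≤ 2 * jap x := by
  have h2 : jap y ≤ Real.sqrt (4 * (1 + x ^ 2)) := by
    apply Real.sqrt_le_sqrt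
    nlinarith [sq_abs x, sq_abs y, abs_nonneg y, abs_nonneg x]
  calc jap y ≤ Real.sqrt (4 * (1 + x ^ 2)) := h2
    _ = 2 * jap x := by
        rw [Real.sqrt_mul (by norm_num), show Real.sqrt 4 = 2 by
          rw [show (4:ℝ) = 2^2 by norm_num, Real.sqrt_sq (by norm_num)]]
        rfl

lemma jap_le_one_add_abs (x : ℝ) : jap x ≤ 1 + |x| := by
  rw [jap, show (1 + |x|) = Real.sqrt ((1+|x|)^2) by
    rw [Real.sqrt_sq (by positivity)]]
  exact Real.sqrt_le_sqrt (by nlinarith [sq_abs x, abs_nonneg x])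

lemma one_add_abs_le (x : ℝ) : 1 + |x| ≤ Real.sqrt 2 * jap x := by
  rw [show Real.sqrt 2 * jap x = Real.sqrt (2 * (1 + x^2)) by
    rw [Real.sqrt_mul (by norm_num)]; rfl]
  rw [show (1 + |x|) = Real.sqrt ((1+|x|)^2) by rw [Real.sqrt_sq (by positivity)]]
  exact Real.sqrt_le_sqrt (by nlinarith [sq_abs x, sq_nonneg (1 - |x|)])

lemma continuous_jap : Continuous jap := by
  unfold jap; fun_prop

lemma continuous_japr (s : ℝ) : Continuous (fun x : ℝ => jap x ^ (-s)) :=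
  continuous_jap.rpow_const fun x => Or.inl (jap_pos x).ne'

lemma japr_nonneg (s x : ℝ) : 0 ≤ jap x ^ (-s) := Real.rpow_nonneg (jap_nonneg x) _

lemma japr_le_one {s : ℝ} (hs : 0 ≤ s) (x : ℝ) : jap x ^ (-s) ≤ 1 :=
  Real.rpow_le_one_of_one_le_of_nonpos (one_le_jap x) (neg_nonpos.mpr hs)

lemma rpow_neg_anti {u v s : ℝ} (hu : 0 < u) (huv : u ≤ v) (hs : 0 ≤ s) :
    v ^ (-s) ≤ u ^ (-s) :=
  Real.rpow_le_rpow_of_nonpos hu huv (neg_nonpos.mpr hs)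

lemma integrable_japr {σ : ℝ} (hσ : 1 < σ) :
    Integrable (fun y : ℝ => jap y ^ (-σ)) := by
  have hi : Integrable (fun y : ℝ => Real.sqrt 2 ^ σ * (1 + ‖y‖) ^ (-σ)) := by
    refine Integrable.const_mul ?_ _
    apply integrable_one_add_norm (E := ℝ)
    simp [hσ]
  refine hi.mono' (continuous_japr σ).aestronglyMeasurable (ae_of_all _ fun y => ?_)
  rw [Real.norm_eq_abs, abs_of_nonneg (japr_nonneg _ _)]
  have h1 : (1 + ‖y‖) ^ (-σ) = (1 + |y|) ^ (-σ) := by rw [Real.norm_eq_abs]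
  rw [h1]
  have h2 : (1 + |y|) ^ (-σ) ≥ (Real.sqrt 2 * jap y) ^ (-σ) :=
    rpow_neg_anti (by positivity) (one_add_abs_le y) (by linarith)
  calc jap y ^ (-σ) = Real.sqrt 2 ^ σ * ((Real.sqrt 2 * jap y) ^ (-σ)) := by
        rw [Real.mul_rpow (Real.sqrt_nonneg 2) (jap_nonneg y), ← mul_assoc,
          ← Real.rpow_add (Real.sqrt_pos.mpr two_pos), add_neg_cancel,
          Real.rpow_zero, one_mul]
    _ ≤ Real.sqrt 2 ^ σ * (1 + |y|) ^ (-σ) := by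
        refine mul_le_mul_of_nonneg_left h2 ?_
        positivity

lemma japr_intervalIntegrable (s a b : ℝ) :
    IntervalIntegrable (fun x : ℝ => jap x ^ (-s)) volume a b :=
  (continuous_japr s).intervalIntegrable a b

lemma setIntegral_japr_le_two_mul {s R : ℝ} (hs : 0 ≤ s) (hR : 0 ≤ R) :
    ∫ x in Icc (-R) R, jap x ^ (-s) ≤ 2 * R := by
  have h1 : ∫ x in Icc (-R) R, jap x ^ (-s) ≤ ∫ x in Icc (-R) R, (1:ℝ) := by
    refine setIntegral_mono_on ((continuous_japr s).integrableOn_Icc)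
      (integrableOn_const (by simp)) measurableSet_Icc
      fun x _ => japr_le_one hs x
  have h2 : ∫ x in Icc (-R) R, (1:ℝ) = 2 * R := by
    simp [Real.volume_Icc]
    rw [max_eq_left (by linarith)]
    ring
  linarith

lemma core_bound {s R : ℝ} (hs : 0 ≤ s) (hR : 1 ≤ R) :
    ∫ x in Icc (-R) R, jap x ^ (-s) ≤ 2 + 2 * ∫ x in (1:ℝ)..R, x ^ (-s) := by
  set g := fun x : ℝ => jap x ^ (-s) with hg
  have hRneg : -R ≤ R := by linarith
  have heq : ∫ x in Icc (-R) R, g x = ∫ x in (-R)..R, g x := by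
    rw [intervalIntegral.integral_of_le hRneg, integral_Icc_eq_integral_Ioc]
  have hsplit : ∫ x in (-R)..R, g x =
      (∫ x in (-R)..(-1:ℝ), g x) + (∫ x in (-1:ℝ)..(1:ℝ), g x) + ∫ x in (1:ℝ)..R, g x := by
    rw [intervalIntegral.integral_add_adjacent_intervals
      (japr_intervalIntegrable s _ _) (japr_intervalIntegrable s _ _),
      intervalIntegral.integral_add_adjacent_intervals
      (japr_intervalIntegrable s _ _) (japr_intervalIntegrable s _ _)]
  have hneg : ∫ x in (-R)..(-1:ℝ), g x = ∫ x in (1:ℝ)..R, g x := by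
    have := intervalIntegral.integral_comp_neg (a := 1) (b := R) g
    simp only [hg, jap_neg] at this
    rw [← this]
  have hmid : ∫ x in (-1:ℝ)..(1:ℝ), g x ≤ 2 := by
    have : ∫ x in (-1:ℝ)..(1:ℝ), g x ≤ ∫ x in (-1:ℝ)..(1:ℝ), (1:ℝ) := by
      refine intervalIntegral.integral_mono_on (by norm_num)
        (japr_intervalIntegrable s _ _) (intervalIntegrable_const) ?_
      exact fun x _ => japr_le_one hs x
    simpa using this.trans (by norm_num)
  have hlast : ∫ x in (1:ℝ)..R, g x ≤ ∫ x in (1:ℝ)..R, x ^ (-s) := by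
    refine intervalIntegral.integral_mono_on hR (japr_intervalIntegrable s _ _)
      (intervalIntegral.intervalIntegrable_rpow (Or.inr ?_)) ?_
    · intro h
      rw [Set.uIcc_of_le hR] at h
      exact absurd h.1 (by norm_num)
    · intro x hx
      exact rpow_neg_anti (by linarith [hx.1]) (le_trans (le_abs_self x) (abs_le_jap x)) hs
  rw [heq, hsplit, hneg]
  linarith

lemma phi_lt {s R : ℝ} (hs0 : 0 ≤ s) (hs : s < 1) (hR : 0 ≤ R) :
    ∫ x in Icc (-R) R, jap x ^ (-s) ≤ (2 + 2/(1-s)) * jap R ^ (1-s) := by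
  have hjr : (1:ℝ) ≤ jap R ^ (1-s) :=
    Real.one_le_rpow (one_le_jap R) (by linarith)
  have hc : (0:ℝ) < 1 - s := by linarith
  rcases le_or_gt R 1 with h1 | h1
  · have := setIntegral_japr_le_two_mul hs0 hR
    nlinarith [div_nonneg (by norm_num : (0:ℝ) ≤ 2) hc.le]
  · have hcore := core_bound hs0 h1.le
    have hval : ∫ x in (1:ℝ)..R, x ^ (-s) = (R ^ (1-s) - 1)/(1-s) := by
      rw [integral_rpow (Or.inl (by linarith))]
      norm_num
      rw [show -s + 1 = 1 - s by ring]
    have hRle : R ^ (1-s) ≤ jap R ^ (1-s) :=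
      Real.rpow_le_rpow hR (le_trans (le_abs_self R) (abs_le_jap R)) hc.le
    have h2 : (R ^ (1-s) - 1)/(1-s) ≤ jap R ^ (1-s) / (1-s) := by
      gcongr
      linarith
    have hfin : 2 + 2 * (jap R ^ (1-s) / (1-s)) ≤ (2 + 2/(1-s)) * jap R ^ (1-s) := by
      have hE : (2 + 2/(1-s)) * (jap R ^ (1-s)) =
          2 * jap R ^ (1-s) + 2 * (jap R ^ (1-s) / (1-s)) := by
        field_simp
      rw [hE]; linarith
    rw [hval] at hcore
    linarith

lemma log_two_ge_half : (1/2 : ℝ) ≤ Real.log 2 := by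
  have := Real.log_two_gt_d9
  linarith

lemma phi_eq {R : ℝ} (hR : 0 ≤ R) :
    ∫ x in Icc (-R) R, jap x ^ (-(1:ℝ)) ≤ 6 * Real.log (1 + jap R) := by
  have hL2 : Real.log 2 ≤ Real.log (1 + jap R) := by
    apply Real.log_le_log (by norm_num)
    linarith [one_le_jap R]
  have hLpos : (1/2:ℝ) ≤ Real.log (1 + jap R) := le_trans log_two_ge_half hL2
  rcases le_or_gt R 1 with h1 | h1
  · have := setIntegral_japr_le_two_mul (s := 1) zero_le_one hR
    linarith
  · have hcore := core_bound zero_le_one h1.le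
    have hval : ∫ x in (1:ℝ)..R, x ^ (-(1:ℝ)) = Real.log R := by
      have hcg : ∀ x ∈ Set.uIcc (1:ℝ) R, x ^ (-(1:ℝ)) = x⁻¹ := by
        intro x hx
        rw [Set.uIcc_of_le h1.le] at hx
        rw [Real.rpow_neg_one]
      rw [intervalIntegral.integral_congr hcg, integral_inv (by
        intro h; rw [Set.uIcc_of_le h1.le] at h; exact absurd h.1 (by norm_num))]
      simp
    have hlogR : Real.log R ≤ Real.log (1 + jap R) := by
      apply Real.log_le_log (by linarith)
      linarith [le_trans (le_abs_self R) (abs_le_jap R), jap_nonneg R]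
    rw [hval] at hcore
    linarith

lemma phi_gt {s R : ℝ} (hs : 1 < s) (hR : 0 ≤ R) :
    ∫ x in Icc (-R) R, jap x ^ (-s) ≤ 2 + 2/(s-1) := by
  have hc : (0:ℝ) < s - 1 := by linarith
  have hd : (0:ℝ) ≤ 2/(s-1) := by positivity
  rcases le_or_gt R 1 with h1 | h1
  · have := setIntegral_japr_le_two_mul (s := s) (by linarith) hR
    linarith
  · have hcore := core_bound (s := s) (by linarith) h1.le
    have hval : ∫ x in (1:ℝ)..R, x ^ (-s) = (R ^ (1-s) - 1)/(1-s) := by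
      rw [integral_rpow (Or.inr ⟨fun h => hs.ne' (by linarith [neg_inj.mp h]), by
        intro h; rw [Set.uIcc_of_le h1.le] at h; exact absurd h.1 (by norm_num)⟩)]
      norm_num
      rw [show -s + 1 = 1 - s by ring]
    have hRpos : (0:ℝ) ≤ R ^ (1-s) := Real.rpow_nonneg (by linarith) _
    have h2 : (R ^ (1-s) - 1)/(1-s) ≤ 1/(s-1) := by
      have e : (R ^ (1-s) - 1)/(1-s) = (1 - R ^ (1-s))/(s-1) := by
        rw [div_eq_div_iff (by linarith) (by linarith)]
        ring
      rw [e]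
      gcongr
      linarith
    have e2 : 2/(s-1) = 2*(1/(s-1)) := by ring
    rw [hval] at hcore
    linarith

lemma tail_Ici {σ c : ℝ} (hσ : 1 < σ) (hc : 1 ≤ c) :
    ∫ y in Ici c, jap y ^ (-σ) ≤ c ^ (1-σ) / (σ-1) := by
  have hc0 : (0:ℝ) < c := by linarith
  rw [integral_Ici_eq_integral_Ioi]
  have h1 : ∫ y in Ioi c, jap y ^ (-σ) ≤ ∫ y in Ioi c, y ^ (-σ) := by
    refine setIntegral_mono_on ((integrable_japr hσ).integrableOn)
      (integrableOn_Ioi_rpow_of_lt (by linarith) hc0) measurableSet_Ioi ?_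
    intro y hy
    exact rpow_neg_anti (lt_trans hc0 hy) (le_trans (le_abs_self y) (abs_le_jap y))
      (by linarith)
  have h2 : ∫ y in Ioi c, y ^ (-σ) = c ^ (1-σ) / (σ-1) := by
    rw [integral_Ioi_rpow_of_lt (by linarith) hc0]
    rw [show -σ + 1 = 1 - σ by ring]
    rw [show (1-σ) = -(σ-1) by ring, neg_div, div_neg, neg_neg]
  linarith

lemma tail_Iic {σ c : ℝ} (hσ : 1 < σ) (hc : 1 ≤ c) :
    ∫ y in Iic (-c), jap y ^ (-σ) ≤ c ^ (1-σ) / (σ-1) := by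
  have := integral_comp_neg_Iic (-c) (fun y : ℝ => jap y ^ (-σ))
  simp only [jap_neg, neg_neg] at this
  rw [this, ← integral_Ici_eq_integral_Ioi]
  exact tail_Ici hσ hc

lemma tail_full {σ : ℝ} (hσ : 1 < σ) :
    ∫ y : ℝ, jap y ^ (-σ) ≤ 2 + 2 / (σ-1) := by
  have hint := integrable_japr hσ
  have hsplit := MeasureTheory.integral_add_compl (measurableSet_Icc :
    MeasurableSet (Icc (-1:ℝ) 1)) hint
  rw [← hsplit]
  have hca : (Icc (-1:ℝ) 1)ᶜ = Iio (-1:ℝ) ∪ Ioi 1 := by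
    ext y
    simp only [mem_compl_iff, mem_Icc, not_and_or, not_le, mem_union, mem_Iio, mem_Ioi]
  have hmid : ∫ y in Icc (-1:ℝ) 1, jap y ^ (-σ) ≤ 2 := by
    have := setIntegral_japr_le_two_mul (s := σ) (by linarith) (zero_le_one)
    linarith
  have hcompl : ∫ y in (Icc (-1:ℝ) 1)ᶜ, jap y ^ (-σ) ≤ 2/(σ-1) := by
    rw [hca, setIntegral_union (by
        rw [Set.disjoint_left]
        intro y hy1 hy2
        simp only [mem_Iio, mem_Ioi] at hy1 hy2
        linarith) measurableSet_Ioi hint.integrableOn hint.integrableOn]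
    have hl : ∫ y in Iio (-1:ℝ), jap y ^ (-σ) ≤ 1/(σ-1) := by
      rw [show Iio (-1:ℝ) = Iio (-(1:ℝ)) by norm_num, ← integral_Iic_eq_integral_Iio]
      have := tail_Iic hσ (le_refl 1)
      simpa using this
    have hr : ∫ y in Ioi (1:ℝ), jap y ^ (-σ) ≤ 1/(σ-1) := by
      rw [← integral_Ici_eq_integral_Ioi]
      have := tail_Ici hσ (le_refl 1)
      simpa using this
    have : 2/(σ-1) = 1/(σ-1) + 1/(σ-1) := by ring
    linarith
  linarith

lemma tail_bound {σ : ℝ} (hσ : 1 < σ) {A : ℝ} (hA : 0 ≤ A) :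
    ∫ y in {y : ℝ | 2*A ≤ |y|}, jap y ^ (-σ) ≤
      ((2 + 2/(σ-1)) * 2 ^ σ) * jap A ^ (1-σ) := by
  have hσ1 : (0:ℝ) < σ - 1 := by linarith
  have hint := integrable_japr hσ
  have h2σ : (0:ℝ) < 2 ^ σ := Real.rpow_pos_of_pos two_pos σ
  have hnn : 0 ≤ᵐ[volume] fun y : ℝ => jap y ^ (-σ) := ae_of_all _ fun y => japr_nonneg σ y
  rcases le_or_gt 1 (2*A) with h1 | h1
  · -- A ≥ 1/2
    have hsub : {y : ℝ | 2*A ≤ |y|} ⊆ Iic (-(2*A)) ∪ Ici (2*A) := by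
      intro y hy
      simp only [mem_setOf_eq] at hy
      rcases le_or_gt 0 y with h0 | h0
      · right
        rw [abs_of_nonneg h0] at hy
        exact hy
      · left
        rw [abs_of_neg h0] at hy
        simp only [mem_Iic]
        linarith
    have hmono : ∫ y in {y : ℝ | 2*A ≤ |y|}, jap y ^ (-σ) ≤
        ∫ y in Iic (-(2*A)) ∪ Ici (2*A), jap y ^ (-σ) :=
      setIntegral_mono_set hint.integrableOn
        (ae_of_all _ fun y => japr_nonneg σ y) (HasSubset.Subset.eventuallyLE hsub)
    have hd : Disjoint (Iic (-(2*A))) (Ici (2*A)) := by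
      rw [Set.disjoint_left]
      intro y hy1 hy2
      simp only [mem_Iic] at hy1
      simp only [mem_Ici] at hy2
      linarith
    have hun : ∫ y in Iic (-(2*A)) ∪ Ici (2*A), jap y ^ (-σ) =
        (∫ y in Iic (-(2*A)), jap y ^ (-σ)) + ∫ y in Ici (2*A), jap y ^ (-σ) :=
      setIntegral_union hd measurableSet_Ici hint.integrableOn hint.integrableOn
    have hl := tail_Iic hσ h1
    have hr := tail_Ici hσ h1
    have hX : ((2*A) : ℝ) ^ (1-σ) ≤ 2 ^ σ * jap A ^ (1-σ) := by
      have h3A : (2/3 : ℝ) * jap A ≤ 2*A := by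
        have := jap_le_one_add_abs A
        rw [abs_of_nonneg hA] at this
        nlinarith
      have hp : (0:ℝ) < (2/3 : ℝ) * jap A := mul_pos (by norm_num) (jap_pos A)
      have h1' : ((2*A) : ℝ) ^ (1-σ) ≤ ((2/3 : ℝ) * jap A) ^ (1-σ) :=
        Real.rpow_le_rpow_of_nonpos hp h3A (by linarith)
      have h2' : ((2/3 : ℝ) * jap A) ^ (1-σ) = (2/3 : ℝ) ^ (1-σ) * jap A ^ (1-σ) :=
        Real.mul_rpow (by norm_num) (jap_nonneg A)
      have h3' : (2/3 : ℝ) ^ (1-σ) ≤ 2 ^ σ := by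
        rw [show (2/3:ℝ) = ((3/2:ℝ))⁻¹ by norm_num,
          Real.inv_rpow (by norm_num), ← Real.rpow_neg (by norm_num),
          show -(1-σ) = σ - 1 by ring]
        calc ((3/2:ℝ)) ^ (σ-1) ≤ (2:ℝ) ^ (σ-1) :=
              Real.rpow_le_rpow (by norm_num) (by norm_num) (by linarith)
          _ ≤ (2:ℝ) ^ σ := Real.rpow_le_rpow_of_exponent_le one_le_two (by linarith)
      calc ((2*A) : ℝ) ^ (1-σ) ≤ (2/3 : ℝ) ^ (1-σ) * jap A ^ (1-σ) := by
            rw [← h2']; exact h1'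
        _ ≤ 2 ^ σ * jap A ^ (1-σ) :=
            mul_le_mul_of_nonneg_right h3' (Real.rpow_nonneg (jap_nonneg A) _)
    have hjnn : (0:ℝ) ≤ jap A ^ (1-σ) := Real.rpow_nonneg (jap_nonneg A) _
    calc ∫ y in {y : ℝ | 2*A ≤ |y|}, jap y ^ (-σ)
        ≤ (∫ y in Iic (-(2*A)), jap y ^ (-σ)) + ∫ y in Ici (2*A), jap y ^ (-σ) := by
          rw [← hun]; exact hmono
      _ ≤ (2*A) ^ (1-σ) / (σ-1) + (2*A) ^ (1-σ) / (σ-1) := add_le_add hl hr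
      _ = (2/(σ-1)) * (2*A) ^ (1-σ) := by ring
      _ ≤ (2/(σ-1)) * (2 ^ σ * jap A ^ (1-σ)) :=
          mul_le_mul_of_nonneg_left hX (by positivity)
      _ ≤ ((2 + 2/(σ-1)) * 2 ^ σ) * jap A ^ (1-σ) := by
          rw [show (2/(σ-1)) * (2 ^ σ * jap A ^ (1-σ)) =
            ((2/(σ-1)) * 2 ^ σ) * jap A ^ (1-σ) by ring]
          refine mul_le_mul_of_nonneg_right ?_ hjnn
          have : (0:ℝ) < 2 ^ σ := h2σ
          nlinarith
  · -- 2A < 1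
    have hle : ∫ y in {y : ℝ | 2*A ≤ |y|}, jap y ^ (-σ) ≤ ∫ y : ℝ, jap y ^ (-σ) :=
      setIntegral_le_integral hint hnn
    have hja : jap A ≤ 2 := by
      calc jap A ≤ 1 + |A| := jap_le_one_add_abs A
        _ ≤ 2 := by rw [abs_of_nonneg hA]; linarith
    have hjr : (2:ℝ) ^ (1-σ) ≤ jap A ^ (1-σ) := by
      have := Real.rpow_le_rpow_of_nonpos (jap_pos A) hja (by linarith : 1-σ ≤ 0)
      exact this
    have h21 : (2:ℝ) ^ σ * (2:ℝ) ^ (1-σ) = 2 := by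
      rw [← Real.rpow_add two_pos]
      norm_num
    have hfull := tail_full hσ
    calc ∫ y in {y : ℝ | 2*A ≤ |y|}, jap y ^ (-σ) ≤ 2 + 2/(σ-1) := le_trans hle hfull
      _ = (2 + 2/(σ-1)) * 1 := by ring
      _ ≤ (2 + 2/(σ-1)) * (2 ^ σ * jap A ^ (1-σ)) := by
          refine mul_le_mul_of_nonneg_left ?_ (by positivity)
          calc (1:ℝ) ≤ 2 := one_le_two
            _ = 2 ^ σ * 2 ^ (1-σ) := h21.symm
            _ ≤ 2 ^ σ * jap A ^ (1-σ) := mul_le_mul_of_nonneg_left hjr h2σ.le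
      _ = ((2 + 2/(σ-1)) * 2 ^ σ) * jap A ^ (1-σ) := by ring

lemma two_rpow_pos (t : ℝ) : (0:ℝ) < 2 ^ t := Real.rpow_pos_of_pos two_pos t

lemma half_jap_rpow {J t : ℝ} (hJ : 0 < J) : (J/2) ^ (-t) = 2 ^ t * J ^ (-t) := by
  rw [div_eq_mul_inv, Real.mul_rpow hJ.le (by norm_num), Real.inv_rpow (by norm_num),
    ← Real.rpow_neg (by norm_num), neg_neg]
  ring

lemma japr_le_of_le {w z t : ℝ} (ht : 0 ≤ t) (h : jap z ≤ 2 * jap w) :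
    jap w ^ (-t) ≤ 2 ^ t * jap z ^ (-t) := by
  have h1 : jap z / 2 ≤ jap w := by linarith
  have h2 : jap w ^ (-t) ≤ (jap z / 2) ^ (-t) :=
    rpow_neg_anti (by linarith [jap_pos z]) h1 ht
  rwa [half_jap_rpow (jap_pos z)] at h2

lemma decomp (β γ : ℝ) (hγ : 0 ≤ γ) (hβ : 0 ≤ β) (a₁ a₂ x : ℝ) :
    jap (x-a₁) ^ (-β) * jap (x-a₂) ^ (-γ) ≤
      indicator (Icc (-(|a₁-a₂|/2)) (|a₁-a₂|/2))
        (fun y => 2^β * jap (a₁-a₂) ^ (-β) * jap y ^ (-γ)) (x - a₂)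
    + indicator (Icc (-(2*|a₁-a₂|)) (2*|a₁-a₂|))
        (fun y => 2^γ * jap (a₁-a₂) ^ (-γ) * jap y ^ (-β)) (x - a₁)
    + indicator {y : ℝ | 2*|a₁-a₂| ≤ |y|}
        (fun y => 2^γ * jap y ^ (-(β+γ))) (x - a₁) := by
  set a := a₁ - a₂ with ha
  set A := |a| with hA
  set J := jap a with hJdef
  set u := x - a₁ with hu
  set v := x - a₂ with hv
  have hva : v = u + a := by rw [hu, hv, ha]; ring
  have hAnn : 0 ≤ A := abs_nonneg a
  have i0nn : 0 ≤ indicator (Icc (-(A/2)) (A/2))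
      (fun y => 2^β * J ^ (-β) * jap y ^ (-γ)) v :=
    Set.indicator_nonneg (fun y _ => mul_nonneg
      (mul_nonneg (two_rpow_pos β).le (japr_nonneg β a)) (japr_nonneg γ y)) v
  have i1nn : 0 ≤ indicator (Icc (-(2*A)) (2*A))
      (fun y => 2^γ * J ^ (-γ) * jap y ^ (-β)) u :=
    Set.indicator_nonneg (fun y _ => mul_nonneg
      (mul_nonneg (two_rpow_pos γ).le (japr_nonneg γ a)) (japr_nonneg β y)) u
  have i2nn : 0 ≤ indicator {y : ℝ | 2*A ≤ |y|}
      (fun y => 2^γ * jap y ^ (-(β+γ))) u :=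
    Set.indicator_nonneg (fun y _ => mul_nonneg
      (two_rpow_pos γ).le (japr_nonneg (β+γ) y)) u
  by_cases h0 : |v| ≤ A/2
  · have hmem : v ∈ Icc (-(A/2)) (A/2) := by
      rw [mem_Icc]
      constructor <;> [linarith [neg_abs_le v]; linarith [le_abs_self v]]
    have hAu : A ≤ 2 * |u| := by
      have h1 : A = |v - u| := by rw [hva, hA]; congr 1; ring
      have h2 : |v - u| ≤ |v| + |u| := abs_sub v u
      linarith
    have hjap : J ≤ 2 * jap u := jap_le_two_mul hAu
    have hub : jap u ^ (-β) ≤ 2^β * J ^ (-β) := japr_le_of_le hβ hjap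
    have hle : jap u ^ (-β) * jap v ^ (-γ) ≤ 2^β * J ^ (-β) * jap v ^ (-γ) :=
      mul_le_mul_of_nonneg_right hub (japr_nonneg γ v)
    rw [Set.indicator_of_mem hmem]
    linarith
  · push_neg at h0
    by_cases h2 : 2*A ≤ |u|
    · have hmem : u ∈ {y : ℝ | 2*A ≤ |y|} := h2
      have huv : |u| ≤ 2 * |v| := by
        have hvu : u = v - a := by rw [hva]; ring
        have h1 : |u| ≤ |v| + A := by rw [hvu]; exact abs_sub v a
        linarith
      have hjap : jap u ≤ 2 * jap v := jap_le_two_mul huv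
      have hvb : jap v ^ (-γ) ≤ 2^γ * jap u ^ (-γ) := japr_le_of_le hγ hjap
      have hle : jap u ^ (-β) * jap v ^ (-γ) ≤ 2^γ * jap u ^ (-(β+γ)) := by
        calc jap u ^ (-β) * jap v ^ (-γ) ≤ jap u ^ (-β) * (2^γ * jap u ^ (-γ)) :=
              mul_le_mul_of_nonneg_left hvb (japr_nonneg β u)
          _ = 2^γ * jap u ^ (-(β+γ)) := by
              rw [show -(β+γ) = -β + -γ by ring, Real.rpow_add (jap_pos u)]
              ring
      rw [Set.indicator_of_mem hmem]
      linarith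
    · push_neg at h2
      have hmem : u ∈ Icc (-(2*A)) (2*A) := by
        rw [mem_Icc]
        constructor <;> [linarith [neg_abs_le u]; linarith [le_abs_self u]]
      have hAv : A ≤ 2 * |v| := by linarith
      have hjap : J ≤ 2 * jap v := jap_le_two_mul hAv
      have hvb : jap v ^ (-γ) ≤ 2^γ * J ^ (-γ) := japr_le_of_le hγ hjap
      have hle : jap u ^ (-β) * jap v ^ (-γ) ≤ 2^γ * J ^ (-γ) * jap u ^ (-β) := by
        calc jap u ^ (-β) * jap v ^ (-γ) ≤ jap u ^ (-β) * (2^γ * J ^ (-γ)) :=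
             mul_le_mul_of_nonneg_left hvb (japr_nonneg β u)
          _ = 2^γ * J ^ (-γ) * jap u ^ (-β) := by ring
      rw [Set.indicator_of_mem hmem]
      linarith

lemma lint_le {g h : ℝ → ℝ} (hh : Integrable h) (h0 : ∀ x, 0 ≤ h x)
    (hgh : ∀ x, g x ≤ h x) {M : ℝ} (hM : ∫ x, h x ≤ M) :
    ∫⁻ x, ENNReal.ofReal (g x) ≤ ENNReal.ofReal M :=
  calc ∫⁻ x, ENNReal.ofReal (g x) ≤ ∫⁻ x, ENNReal.ofReal (h x) :=
        lintegral_mono fun x => ENNReal.ofReal_le_ofReal (hgh x)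
    _ = ENNReal.ofReal (∫ x, h x) :=
        (ofReal_integral_eq_lintegral_ofReal hh (ae_of_all _ h0)).symm
    _ ≤ ENNReal.ofReal M := ENNReal.ofReal_le_ofReal hM

lemma jap_abs (x : ℝ) : jap |x| = jap x := by simp [jap, sq_abs]

lemma hc1_lemma (β γ : ℝ) (hγ : 0 ≤ γ) (hβγ : γ ≤ β) (hsum : 1 < β + γ) :
    ∃ K : ℝ, 0 < K ∧ ∀ A : ℝ, 0 ≤ A →
      ∫ y in Icc (-(A/2)) (A/2), jap y ^ (-γ) ≤
        K * (jap A ^ (β-γ) *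
          (if 1 < β then 1 else if β = 1 then Real.log (1 + jap A) else jap A ^ (1-β))) := by
  have hβ0 : 0 ≤ β := le_trans hγ hβγ
  rcases lt_trichotomy γ 1 with hγ1 | hγ1 | hγ1
  · -- γ < 1
    have hpos1γ : (0:ℝ) < 1 - γ := by linarith
    refine ⟨(2 + 2/(1-γ)) * 2,
      mul_pos (add_pos two_pos (div_pos two_pos hpos1γ)) two_pos, fun A hA => ?_⟩
    have h1 := phi_lt hγ hγ1 (by linarith : (0:ℝ) ≤ A/2)
    have h2 : jap (A/2) ^ (1-γ) ≤ jap A ^ (1-γ) := by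
      refine Real.rpow_le_rpow (jap_nonneg _) (jap_mono ?_) (by linarith)
      rw [abs_of_nonneg (by linarith : (0:ℝ) ≤ A/2), abs_of_nonneg hA]
      linarith
    have h3 : jap A ^ (1-γ) = jap A ^ (β-γ) * jap A ^ (1-β) := by
      rw [← Real.rpow_add (jap_pos A), show β - γ + (1-β) = 1 - γ by ring]
    have hkey : jap A ^ (1-β) ≤
        2 * (if 1 < β then 1 else if β = 1 then Real.log (1 + jap A) else jap A ^ (1-β)) := by
      have hJ := one_le_jap A
      split_ifs with hb1 hb2
      · have : jap A ^ (1-β) ≤ 1 :=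
          Real.rpow_le_one_of_one_le_of_nonpos hJ (by linarith)
        linarith
      · rw [hb2, sub_self, Real.rpow_zero]
        have hl2 : Real.log 2 ≤ Real.log (1 + jap A) :=
          Real.log_le_log (by norm_num) (by linarith)
        linarith [log_two_ge_half]
      · nlinarith [Real.rpow_pos_of_pos (jap_pos A) (1-β)]
    have hC : (0:ℝ) < 2 + 2/(1-γ) := add_pos two_pos (div_pos two_pos hpos1γ)
    have hrnn : (0:ℝ) ≤ jap A ^ (β-γ) := Real.rpow_nonneg (jap_nonneg A) _
    calc ∫ y in Icc (-(A/2)) (A/2), jap y ^ (-γ)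
        ≤ (2 + 2/(1-γ)) * jap (A/2) ^ (1-γ) := h1
      _ ≤ (2 + 2/(1-γ)) * (jap A ^ (β-γ) * jap A ^ (1-β)) := by
          rw [← h3]; exact mul_le_mul_of_nonneg_left h2 hC.le
      _ ≤ (2 + 2/(1-γ)) * (jap A ^ (β-γ) *
            (2 * (if 1 < β then 1 else if β = 1 then Real.log (1 + jap A)
              else jap A ^ (1-β)))) := by
          refine mul_le_mul_of_nonneg_left
            (mul_le_mul_of_nonneg_left hkey hrnn) hC.le
      _ = ((2 + 2/(1-γ)) * 2) * (jap A ^ (β-γ) *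
            (if 1 < β then 1 else if β = 1 then Real.log (1 + jap A)
              else jap A ^ (1-β))) := by ring
  · -- γ = 1
    subst hγ1
    rcases eq_or_lt_of_le hβγ with hβ1 | hβ1
    · -- β = 1
      refine ⟨6, by norm_num, fun A hA => ?_⟩
      have h1 := phi_eq (by linarith : (0:ℝ) ≤ A/2)
      have h2 : Real.log (1 + jap (A/2)) ≤ Real.log (1 + jap A) := by
        refine Real.log_le_log (by linarith [jap_pos (A/2)]) ?_
        have : jap (A/2) ≤ jap A := by
          refine jap_mono ?_
          rw [abs_of_nonneg (by linarith : (0:ℝ) ≤ A/2), abs_of_nonneg hA]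
          linarith
        linarith
      rw [← hβ1]
      simp only [lt_self_iff_false, if_false, if_true, sub_self, Real.rpow_zero, one_mul,
        if_neg (lt_irrefl (1:ℝ))]
      linarith
    · -- 1 < β
      have hε : (0:ℝ) < β - 1 := by linarith
      refine ⟨6 * (2 ^ β / (β-1)), by positivity, fun A hA => ?_⟩
      have h1 := phi_eq (by linarith : (0:ℝ) ≤ A/2)
      have hJ := one_le_jap A
      have h2 : Real.log (1 + jap (A/2)) ≤ Real.log (1 + jap A) := by
        refine Real.log_le_log (by linarith [jap_pos (A/2)]) ?_
        have : jap (A/2) ≤ jap A := by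
          refine jap_mono ?_
          rw [abs_of_nonneg (by linarith : (0:ℝ) ≤ A/2), abs_of_nonneg hA]
          linarith
        linarith
      have hlog : Real.log (1 + jap A) ≤ 2 ^ β / (β-1) * jap A ^ (β-1) := by
        have hJp : (0:ℝ) < 1 + jap A := by linarith
        have e1 : Real.log (1 + jap A) = Real.log ((1 + jap A) ^ (β-1)) / (β-1) := by
          rw [Real.log_rpow hJp]
          field_simp
        have e2 : Real.log ((1 + jap A) ^ (β-1)) ≤ (1 + jap A) ^ (β-1) - 1 :=
          Real.log_le_sub_one_of_pos (Real.rpow_pos_of_pos hJp (β-1))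
        have e3 : (1 + jap A) ^ (β-1) ≤ (2 * jap A) ^ (β-1) :=
          Real.rpow_le_rpow (by linarith) (by linarith) hε.le
        have e4 : ((2:ℝ) * jap A) ^ (β-1) = 2 ^ (β-1) * jap A ^ (β-1) :=
          Real.mul_rpow (by norm_num) (jap_nonneg A)
        have e5 : (2:ℝ) ^ (β-1) ≤ 2 ^ β :=
          Real.rpow_le_rpow_of_exponent_le one_le_two (by linarith)
        have e6 : (0:ℝ) ≤ jap A ^ (β-1) := Real.rpow_nonneg (jap_nonneg A) _
        rw [e1, div_le_iff₀ hε]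
        calc Real.log ((1 + jap A) ^ (β-1)) ≤ (1 + jap A) ^ (β-1) - 1 := e2
          _ ≤ 2 ^ β * jap A ^ (β-1) := by nlinarith
          _ = 2 ^ β / (β-1) * jap A ^ (β-1) * (β-1) := by field_simp
      simp only [if_pos hβ1, mul_one]
      calc ∫ y in Icc (-(A/2)) (A/2), jap y ^ (-(1:ℝ))
          ≤ 6 * Real.log (1 + jap (A/2)) := h1
        _ ≤ 6 * Real.log (1 + jap A) := by linarith
        _ ≤ 6 * (2 ^ β / (β-1) * jap A ^ (β-1)) := by
            have h6 : (0:ℝ) ≤ 6 := by norm_num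
            exact mul_le_mul_of_nonneg_left hlog h6
        _ = 6 * (2 ^ β / (β-1)) * jap A ^ (β-1) := by ring
  · -- 1 < γ
    have hβ1 : 1 < β := lt_of_lt_of_le hγ1 hβγ
    have hposγ1 : (0:ℝ) < γ - 1 := by linarith
    refine ⟨2 + 2/(γ-1), add_pos two_pos (div_pos two_pos hposγ1), fun A hA => ?_⟩
    have h1 := phi_gt hγ1 (by linarith : (0:ℝ) ≤ A/2)
    have h2 : (1:ℝ) ≤ jap A ^ (β-γ) :=
      Real.one_le_rpow (one_le_jap A) (by linarith)
    simp only [if_pos hβ1, mul_one]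
    have hC : (0:ℝ) < 2 + 2/(γ-1) := add_pos two_pos (div_pos two_pos hposγ1)
    nlinarith

lemma hc2_lemma (β γ : ℝ) (hγ : 0 ≤ γ) (hβγ : γ ≤ β) (hsum : 1 < β + γ) :
    ∃ K : ℝ, 0 < K ∧ ∀ A : ℝ, 0 ≤ A →
      ∫ y in Icc (-(2*A)) (2*A), jap y ^ (-β) ≤
        K * (if 1 < β then 1 else if β = 1 then Real.log (1 + jap A) else jap A ^ (1-β)) := by
  have hβ0 : 0 ≤ β := le_trans hγ hβγ
  have h2A : ∀ A : ℝ, 0 ≤ A → jap (2*A) ≤ 2 * jap A := by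
    intro A hA
    refine jap_le_two_mul ?_
    rw [abs_of_nonneg (by linarith : (0:ℝ) ≤ 2*A), abs_of_nonneg hA]
  rcases lt_trichotomy β 1 with hβ1 | hβ1 | hβ1
  · -- β < 1
    have hpos1β : (0:ℝ) < 1 - β := by linarith
    refine ⟨(2 + 2/(1-β)) * 2,
      mul_pos (add_pos two_pos (div_pos two_pos hpos1β)) two_pos, fun A hA => ?_⟩
    have h1 := phi_lt hβ0 hβ1 (by linarith : (0:ℝ) ≤ 2*A)
    have h2 : jap (2*A) ^ (1-β) ≤ (2 * jap A) ^ (1-β) :=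
      Real.rpow_le_rpow (jap_nonneg _) (h2A A hA) hpos1β.le
    have h3 : ((2:ℝ) * jap A) ^ (1-β) = 2 ^ (1-β) * jap A ^ (1-β) :=
      Real.mul_rpow (by norm_num) (jap_nonneg A)
    have h4 : (2:ℝ) ^ (1-β) ≤ 2 := by
      calc (2:ℝ) ^ (1-β) ≤ 2 ^ (1:ℝ) :=
            Real.rpow_le_rpow_of_exponent_le one_le_two (by linarith)
        _ = 2 := Real.rpow_one 2
    have hC : (0:ℝ) < 2 + 2/(1-β) := add_pos two_pos (div_pos two_pos hpos1β)
    have h5 : (0:ℝ) ≤ jap A ^ (1-β) := Real.rpow_nonneg (jap_nonneg A) _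
    simp only [if_neg (not_lt.mpr hβ1.le), if_neg (ne_of_lt hβ1)]
    calc ∫ y in Icc (-(2*A)) (2*A), jap y ^ (-β)
        ≤ (2 + 2/(1-β)) * jap (2*A) ^ (1-β) := h1
      _ ≤ (2 + 2/(1-β)) * (2 ^ (1-β) * jap A ^ (1-β)) := by
          rw [← h3]; exact mul_le_mul_of_nonneg_left h2 hC.le
      _ ≤ (2 + 2/(1-β)) * (2 * jap A ^ (1-β)) := by
          refine mul_le_mul_of_nonneg_left (mul_le_mul_of_nonneg_right h4 h5) hC.le
      _ = (2 + 2/(1-β)) * 2 * jap A ^ (1-β) := by ring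
  · -- β = 1
    refine ⟨12, by norm_num, fun A hA => ?_⟩
    subst hβ1
    have h1 := phi_eq (by linarith : (0:ℝ) ≤ 2*A)
    have hJ := one_le_jap A
    have h2 : Real.log (1 + jap (2*A)) ≤ 2 * Real.log (1 + jap A) := by
      have e1 : 1 + jap (2*A) ≤ (1 + jap A)^2 := by
        have := h2A A hA
        nlinarith [jap_pos (2*A), jap_pos A]
      calc Real.log (1 + jap (2*A)) ≤ Real.log ((1 + jap A)^2) :=
            Real.log_le_log (by linarith [jap_pos (2*A)]) e1
        _ = 2 * Real.log (1 + jap A) := by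
            rw [Real.log_pow]
            norm_num
    rw [if_neg (lt_irrefl (1:ℝ)), if_pos rfl]
    linarith
  · -- 1 < β
    have hposβ1 : (0:ℝ) < β - 1 := by linarith
    refine ⟨2 + 2/(β-1), add_pos two_pos (div_pos two_pos hposβ1), fun A hA => ?_⟩
    have h1 := phi_gt hβ1 (by linarith : (0:ℝ) ≤ 2*A)
    simp only [if_pos hβ1, mul_one]
    exact h1

lemma phikey (β : ℝ) {J : ℝ} (hJ : 1 ≤ J) :
    J ^ (1-β) ≤ 2 * (if 1 < β then 1 else if β = 1 then Real.log (1 + J) else J ^ (1-β)) := by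
  split_ifs with hb1 hb2
  · have : J ^ (1-β) ≤ 1 := Real.rpow_le_one_of_one_le_of_nonpos hJ (by linarith)
    linarith
  · rw [hb2, sub_self, Real.rpow_zero]
    have hl2 : Real.log 2 ≤ Real.log (1 + J) := Real.log_le_log (by norm_num) (by linarith)
    linarith [log_two_ge_half]
  · nlinarith [Real.rpow_pos_of_pos (show (0:ℝ) < J by linarith) (1-β)]

lemma phipos (β : ℝ) {J : ℝ} (hJ : 1 ≤ J) :
    0 < (if 1 < β then (1:ℝ) else if β = 1 then Real.log (1 + J) else J ^ (1-β)) := by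
  split_ifs with hb1 hb2
  · norm_num
  · exact Real.log_pos (by linarith)
  · exact Real.rpow_pos_of_pos (by linarith) _

/-- Convolution integral estimate: if `β ≥ γ ≥ 0` and `β + γ > 1`, then
`∫ ⟨x-a₁⟩^{-β} ⟨x-a₂⟩^{-γ} dx ≤ C ⟨a₁-a₂⟩^{-γ} φ_β(a₁-a₂)`, where `φ_β(a) = 1` if `β > 1`,
`log(1+⟨a⟩)` if `β = 1`, and `⟨a⟩^{1-β}` if `β < 1`. -/
theorem statement_18 (β γ : ℝ) (hγ : 0 ≤ γ) (hβγ : γ ≤ β) (hsum : 1 < β + γ) :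
    ∃ C : ℝ, 0 < C ∧ ∀ a₁ a₂ : ℝ,
      (∫⁻ x : ℝ, ENNReal.ofReal (jap (x - a₁) ^ (-β) * jap (x - a₂) ^ (-γ)))
        ≤ ENNReal.ofReal
            (C * jap (a₁ - a₂) ^ (-γ) *
              (if 1 < β then 1
               else if β = 1 then Real.log (1 + jap (a₁ - a₂))
               else jap (a₁ - a₂) ^ (1 - β))) := by
  have hβ0 : 0 ≤ β := le_trans hγ hβγ
  obtain ⟨K₁, hK₁, h1⟩ := hc1_lemma β γ hγ hβγ hsum
  obtain ⟨K₂, hK₂, h2⟩ := hc2_lemma β γ hγ hβγ hsum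
  set Kt : ℝ := (2 + 2/(β+γ-1)) * 2 ^ (β+γ) with hKt
  have hKtpos : 0 < Kt :=
    mul_pos (add_pos two_pos (div_pos two_pos (by linarith))) (two_rpow_pos _)
  refine ⟨2^β*K₁ + 2^γ*K₂ + 2^γ*Kt*2,
    add_pos (add_pos (mul_pos (two_rpow_pos β) hK₁) (mul_pos (two_rpow_pos γ) hK₂))
      (mul_pos (mul_pos (two_rpow_pos γ) hKtpos) two_pos), ?_⟩
  intro a₁ a₂
  set A : ℝ := |a₁ - a₂| with hAdef
  have hA0 : (0:ℝ) ≤ A := abs_nonneg _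
  have hJeq : jap A = jap (a₁ - a₂) := jap_abs _
  set J : ℝ := jap (a₁ - a₂) with hJdef
  have hJ1 : 1 ≤ J := one_le_jap _
  have hJpos : 0 < J := jap_pos _
  set φ : ℝ := (if 1 < β then (1:ℝ) else if β = 1 then Real.log (1 + J) else J ^ (1-β))
    with hφdef
  have hφpos : 0 < φ := by rw [hφdef]; exact phipos β hJ1
  set F0 : ℝ → ℝ := fun y => 2^β * J^(-β) * jap y ^ (-γ) with hF0
  set F1 : ℝ → ℝ := fun y => 2^γ * J^(-γ) * jap y ^ (-β) with hF1
  set F2 : ℝ → ℝ := fun y => 2^γ * jap y ^ (-(β+γ)) with hF2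
  set S0 : Set ℝ := Icc (-(A/2)) (A/2) with hS0
  set S1 : Set ℝ := Icc (-(2*A)) (2*A) with hS1
  set S2 : Set ℝ := {y : ℝ | 2*A ≤ |y|} with hS2
  have hmS2 : MeasurableSet S2 := measurableSet_le measurable_const continuous_abs.measurable
  have hi0 : Integrable (S0.indicator F0) :=
    ((continuous_const.mul (continuous_japr γ)).integrableOn_Icc).integrable_indicator measurableSet_Icc
  have hi1 : Integrable (S1.indicator F1) :=
    ((continuous_const.mul (continuous_japr β)).integrableOn_Icc).integrable_indicator measurableSet_Icc
  have hi2 : Integrable (S2.indicator F2) :=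
    (((integrable_japr hsum).const_mul _).integrableOn).integrable_indicator hmS2
  have hic0 : Integrable (fun x => S0.indicator F0 (x - a₂)) := hi0.comp_sub_right a₂
  have hic1 : Integrable (fun x => S1.indicator F1 (x - a₁)) := hi1.comp_sub_right a₁
  have hic2 : Integrable (fun x => S2.indicator F2 (x - a₁)) := hi2.comp_sub_right a₁
  have hF0nn : ∀ y, 0 ≤ F0 y := fun y =>
    mul_nonneg (mul_nonneg (two_rpow_pos β).le (Real.rpow_nonneg hJpos.le _)) (japr_nonneg γ y)
  have hF1nn : ∀ y, 0 ≤ F1 y := fun y =>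
    mul_nonneg (mul_nonneg (two_rpow_pos γ).le (Real.rpow_nonneg hJpos.le _)) (japr_nonneg β y)
  have hF2nn : ∀ y, 0 ≤ F2 y := fun y =>
    mul_nonneg (two_rpow_pos γ).le (japr_nonneg (β+γ) y)
  refine lint_le (h := fun x => S0.indicator F0 (x - a₂) + S1.indicator F1 (x - a₁)
      + S2.indicator F2 (x - a₁)) ((hic0.add hic1).add hic2) (fun x => ?_) (fun x => ?_) ?_
  · exact add_nonneg (add_nonneg (Set.indicator_nonneg (fun y _ => hF0nn y) _)
      (Set.indicator_nonneg (fun y _ => hF1nn y) _))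
      (Set.indicator_nonneg (fun y _ => hF2nn y) _)
  · exact decomp β γ hγ hβ0 a₁ a₂ x
  · have hint : ∫ x, (S0.indicator F0 (x - a₂) + S1.indicator F1 (x - a₁)
        + S2.indicator F2 (x - a₁)) =
        (∫ y, S0.indicator F0 y) + (∫ y, S1.indicator F1 y) + ∫ y, S2.indicator F2 y := by
      have A1 : (∫ x, (S0.indicator F0 (x - a₂) + S1.indicator F1 (x - a₁))) =
          (∫ x, S0.indicator F0 (x - a₂)) + ∫ x, S1.indicator F1 (x - a₁) :=
        integral_add hic0 hic1
      have A2 : (∫ x, (S0.indicator F0 (x - a₂) + S1.indicator F1 (x - a₁)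
            + S2.indicator F2 (x - a₁))) =
          (∫ x, (S0.indicator F0 (x - a₂) + S1.indicator F1 (x - a₁)))
            + ∫ x, S2.indicator F2 (x - a₁) :=
        integral_add (hic0.add hic1) hic2
      rw [A2, A1,
        integral_sub_right_eq_self (S0.indicator F0) a₂,
        integral_sub_right_eq_self (S1.indicator F1) a₁,
        integral_sub_right_eq_self (S2.indicator F2) a₁]
    have e0 : ∫ y, S0.indicator F0 y = 2^β * J^(-β) * ∫ y in S0, jap y ^ (-γ) := by
      rw [integral_indicator measurableSet_Icc, hF0]
      exact integral_const_mul _ _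
    have e1 : ∫ y, S1.indicator F1 y = 2^γ * J^(-γ) * ∫ y in S1, jap y ^ (-β) := by
      rw [integral_indicator measurableSet_Icc, hF1]
      exact integral_const_mul _ _
    have e2 : ∫ y, S2.indicator F2 y = 2^γ * ∫ y in S2, jap y ^ (-(β+γ)) := by
      rw [integral_indicator hmS2, hF2]
      exact integral_const_mul _ _
    have b0 := h1 A hA0
    rw [hJeq, ← hφdef] at b0
    have b1 := h2 A hA0
    rw [hJeq, ← hφdef] at b1
    have b2 := tail_bound hsum hA0
    rw [hJeq] at b2
    have hkeyJ : J ^ (1-β) ≤ 2 * φ := by rw [hφdef]; exact phikey β hJ1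
    have hJγnn : (0:ℝ) ≤ J ^ (-γ) := Real.rpow_nonneg hJpos.le _
    have hJβnn : (0:ℝ) ≤ J ^ (-β) := Real.rpow_nonneg hJpos.le _
    have hrw0 : J^(-β) * J^(β-γ) = J^(-γ) := by
      rw [← Real.rpow_add hJpos, show -β + (β-γ) = -γ by ring]
    have hrw2 : J^(1-(β+γ)) = J^(-γ) * J^(1-β) := by
      rw [← Real.rpow_add hJpos, show -γ + (1-β) = 1-(β+γ) by ring]
    have t0 : 2^β * J^(-β) * ∫ y in S0, jap y ^ (-γ) ≤ (2^β*K₁) * J^(-γ) * φ := by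
      calc 2^β * J^(-β) * ∫ y in S0, jap y ^ (-γ)
          ≤ 2^β * J^(-β) * (K₁ * (J ^ (β-γ) * φ)) :=
            mul_le_mul_of_nonneg_left b0
              (mul_nonneg (two_rpow_pos β).le hJβnn)
        _ = (2^β*K₁) * (J^(-β) * J^(β-γ)) * φ := by ring
        _ = (2^β*K₁) * J^(-γ) * φ := by rw [hrw0]
    have t1 : 2^γ * J^(-γ) * ∫ y in S1, jap y ^ (-β) ≤ (2^γ*K₂) * J^(-γ) * φ := by
      calc 2^γ * J^(-γ) * ∫ y in S1, jap y ^ (-β)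
          ≤ 2^γ * J^(-γ) * (K₂ * φ) :=
            mul_le_mul_of_nonneg_left b1 (mul_nonneg (two_rpow_pos γ).le hJγnn)
        _ = (2^γ*K₂) * J^(-γ) * φ := by ring
    have t2 : 2^γ * ∫ y in S2, jap y ^ (-(β+γ)) ≤ (2^γ*Kt*2) * J^(-γ) * φ := by
      have hb2' : ∫ y in S2, jap y ^ (-(β+γ)) ≤ Kt * (J^(-γ) * (2 * φ)) := by
        calc ∫ y in S2, jap y ^ (-(β+γ)) ≤ Kt * J ^ (1-(β+γ)) := b2
          _ = Kt * (J^(-γ) * J^(1-β)) := by rw [hrw2]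
          _ ≤ Kt * (J^(-γ) * (2 * φ)) := by
              refine mul_le_mul_of_nonneg_left
                (mul_le_mul_of_nonneg_left hkeyJ hJγnn) hKtpos.le
      calc 2^γ * ∫ y in S2, jap y ^ (-(β+γ)) ≤ 2^γ * (Kt * (J^(-γ) * (2 * φ))) :=
            mul_le_mul_of_nonneg_left hb2' (two_rpow_pos γ).le
        _ = (2^γ*Kt*2) * J^(-γ) * φ := by ring
    rw [hint, e0, e1, e2]
    have hfin : (2^β*K₁ + 2^γ*K₂ + 2^γ*Kt*2) * J^(-γ) * φ =
        (2^β*K₁) * J^(-γ) * φ + (2^γ*K₂) * J^(-γ) * φ + (2^γ*Kt*2) * J^(-γ) * φ := by ring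
    linarith
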